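/- Let X be a connected simple graph with capacity function c assigning a positive integer to each edge, let B be a cut, and let n ≥ 1. Then there are only finitely many n-thin cuts A that are not nested with B. -/

import Mathlib

open Classical

/-- The set of edges of `G` with one endpoint in `A` and one in the complement of `A`. -/
def cutEdges {V : Type*} (G : SimpleGraph V) (A : Set V) : Set (Sym2 V) :=
  {e | e ∈ G.edgeSet ∧ ∃ u v, e = s(u, v) ∧ u ∈ A ∧ v ∉ A}

/-- The capacity of a cut: the sum of the capacities of the edges across it. -/
noncomputable def cutCap {V : Type*} (G : SimpleGraph V) (c : Sym2 V → ℕ) (A : Set V) : ℕ :=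
  ∑ᶠ e ∈ cutEdges G A, c e

/-- A cut: a nonempty proper subset of the vertices with finite edge boundary. -/
def IsCut {V : Type*} (G : SimpleGraph V) (A : Set V) : Prop :=
  A ≠ ∅ ∧ A ≠ Set.univ ∧ (cutEdges G A).Finite

/-- Two subsets of `V` are nested if at least one of the four corners is empty. -/
def Nested {V : Type*} (A B : Set V) : Prop :=
  A ∩ B = ∅ ∨ A ∩ Bᶜ = ∅ ∨ Aᶜ ∩ B = ∅ ∨ Aᶜ ∩ Bᶜ = ∅

/-- Membership in the Boolean subalgebra of `Set V` generated by a family `F`: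
the smallest family containing `F`, `∅` and `univ`, closed under union,
intersection and complement. -/
inductive BoolGen {V : Type*} (F : Set (Set V)) : Set V → Prop
  | base {A : Set V} : A ∈ F → BoolGen F A
  | empty : BoolGen F ∅
  | univ : BoolGen F Set.univ
  | union {A B : Set V} : BoolGen F A → BoolGen F B → BoolGen F (A ∪ B)
  | inter {A B : Set V} : BoolGen F A → BoolGen F B → BoolGen F (A ∩ B)
  | compl {A : Set V} : BoolGen F A → BoolGen F Aᶜ

/-- A cut is `n`-thin if it has capacity `n` and does not belong to the Boolean
subalgebra `B_{n-1}` generated by the cuts of capacity at most `n - 1`. -/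
def IsThin {V : Type*} (G : SimpleGraph V) (c : Sym2 V → ℕ) (n : ℕ) (A : Set V) : Prop :=
  IsCut G A ∧ cutCap G c A = n ∧
    ¬ BoolGen {B | IsCut G B ∧ cutCap G c B ≤ n - 1} A

section Aux

variable {V : Type*} {G : SimpleGraph V} {A : Set V} {c : Sym2 V → ℕ}

/-- Connectivity within a set: any two members joined by a walk with support in the set. -/
def ConnIn (G : SimpleGraph V) (A : Set V) : Prop :=
  ∀ a ∈ A, ∀ b ∈ A, ∃ w : G.Walk a b, ∀ v ∈ w.support, v ∈ A

lemma cutCap_eq_sum (hfin : (cutEdges G A).Finite) :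
    cutCap G c A = ∑ e ∈ hfin.toFinset, c e :=
  finsum_mem_eq_finite_toFinset_sum _ hfin

lemma le_cutCap (hfin : (cutEdges G A).Finite) {e : Sym2 V} (he : e ∈ cutEdges G A) :
    c e ≤ cutCap G c A := by
  rw [cutCap_eq_sum hfin]
  exact Finset.single_le_sum (fun _ _ => Nat.zero_le _) (hfin.mem_toFinset.mpr he)

lemma cutEdges_eq_empty_of_cutCap_zero (hfin : (cutEdges G A).Finite)
    (hc : ∀ e ∈ G.edgeSet, 0 < c e) (h : cutCap G c A = 0) : cutEdges G A = ∅ := by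
  rw [Set.eq_empty_iff_forall_notMem]
  intro e he
  have h1 : c e ≤ 0 := h ▸ le_cutCap hfin he
  have h2 : 0 < c e := hc e he.1
  omega

lemma eq_empty_or_univ_of_cutEdges_empty (hG : G.Connected) (h : cutEdges G A = ∅) :
    A = ∅ ∨ A = Set.univ := by
  by_contra hcon
  push_neg at hcon
  obtain ⟨hne, hnu⟩ := hcon
  obtain ⟨u, hu⟩ := hne
  obtain ⟨v, hv⟩ := Set.ne_univ_iff_exists_notMem _ |>.mp hnu
  obtain ⟨w⟩ := hG.preconnected u v
  obtain ⟨d, _, hdf, hds⟩ := w.exists_boundary_dart A hu hv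
  have : d.edge ∈ cutEdges G A := ⟨d.edge_mem, d.fst, d.snd, rfl, hdf, hds⟩
  rw [h] at this
  exact this

lemma cutEdges_compl : cutEdges G Aᶜ = cutEdges G A := by
  ext e
  constructor <;> rintro ⟨hes, u, v, rfl, hu, hv⟩
  · exact ⟨hes, v, u, Sym2.eq_swap, by simpa using hv, by simpa using hu⟩
  · exact ⟨hes, v, u, Sym2.eq_swap, by simpa using hv, by simpa using hu⟩

lemma cutEdges_deleteEdges (s : Set (Sym2 V)) :
    cutEdges (G.deleteEdges s) A = cutEdges G A \ s := by
  ext e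
  simp only [cutEdges, Set.mem_setOf_eq, SimpleGraph.edgeSet_deleteEdges, Set.mem_diff]
  tauto

end Aux

lemma key_finite {V : Type*} :
    ∀ (n : ℕ) (G : SimpleGraph V) (c : Sym2 V → ℕ), (∀ e ∈ G.edgeSet, 0 < c e) → ∀ x y : V,
    {A : Set V | x ∈ A ∧ y ∉ A ∧ ConnIn G A ∧ ConnIn G Aᶜ ∧ (cutEdges G A).Finite ∧
      cutCap G c A ≤ n}.Finite := by
  intro n
  induction n with
  | zero =>
    intro G c hc x y
    by_cases hreach : G.Reachable x y
    · obtain ⟨W⟩ := hreach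
      apply Set.Finite.subset Set.finite_empty
      rintro A ⟨hx, hy, -, -, hfin, hcap⟩
      obtain ⟨d, _, hdf, hds⟩ := W.exists_boundary_dart A hx hy
      have he : d.edge ∈ cutEdges G A := ⟨d.edge_mem, d.fst, d.snd, rfl, hdf, hds⟩
      have h1 := le_cutCap (c := c) hfin he
      have h2 := hc _ he.1
      omega
    · apply Set.Finite.subset (Set.finite_singleton {z | G.Reachable x z})
      rintro A ⟨hx, hy, hA, hAc, -, -⟩
      have hsub : A ⊆ {z | G.Reachable x z} := by
        intro z hz
        obtain ⟨w, -⟩ := hA x hx z hz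
        exact ⟨w⟩
      have hsub' : Aᶜ ⊆ {z | G.Reachable y z} := by
        intro z hz
        obtain ⟨w, -⟩ := hAc y hy z hz
        exact ⟨w⟩
      have : A = {z | G.Reachable x z} := by
        apply Set.Subset.antisymm hsub
        intro z hz
        by_contra hzA
        exact hreach (hz.trans (hsub' hzA).symm)
      simpa using this
  | succ m ih =>
    intro G c hc x y
    by_cases hreach : G.Reachable x y
    · obtain ⟨W⟩ := hreach
      have hfin' : ∀ e ∈ {e | e ∈ W.edges},
          {A : Set V | x ∈ A ∧ y ∉ A ∧ ConnIn (G.deleteEdges {e}) A ∧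
            ConnIn (G.deleteEdges {e}) Aᶜ ∧ (cutEdges (G.deleteEdges {e}) A).Finite ∧
            cutCap (G.deleteEdges {e}) c A ≤ m}.Finite := by
        intro e _
        apply ih (G.deleteEdges {e}) c
        intro f hf
        rw [SimpleGraph.edgeSet_deleteEdges] at hf
        exact hc f hf.1
      apply Set.Finite.subset (Set.Finite.biUnion (List.finite_toSet W.edges) hfin')
      rintro A ⟨hx, hy, hA, hAc, hfin, hcap⟩
      obtain ⟨d, hd, hdf, hds⟩ := W.exists_boundary_dart A hx hy
      set e := d.edge with hedef
      have he : e ∈ cutEdges G A := ⟨d.edge_mem, d.fst, d.snd, rfl, hdf, hds⟩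
      have heW : e ∈ {e | e ∈ W.edges} := List.mem_map_of_mem (f := SimpleGraph.Dart.edge) hd
      set G' := G.deleteEdges {e} with hG'def
      have hcut' : cutEdges G' A = cutEdges G A \ {e} := cutEdges_deleteEdges {e}
      -- capacity split
      have hsplit : cutCap G c A = cutCap G' c A + c e := by
        have hunion : cutEdges G A = cutEdges G' A ∪ {e} := by
          rw [hcut']
          rw [Set.diff_union_self]
          exact (Set.union_eq_self_of_subset_right (by simpa using he)).symm
        have hdisj : Disjoint (cutEdges G' A) {e} := by
          rw [hcut']
          exact Set.disjoint_sdiff_left.mono_right le_rfl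
        rw [cutCap, hunion, finsum_mem_union hdisj (hfin.subset (by rw [hcut']; exact Set.diff_subset)) (Set.finite_singleton e), finsum_mem_singleton]
        rfl
      refine Set.mem_biUnion heW ⟨hx, hy, ?_, ?_, ?_, ?_⟩
      · -- ConnIn G' A
        intro a ha b hb
        obtain ⟨w, hw⟩ := hA a ha b hb
        have hwe : ∀ f ∈ w.edges, f ∈ G'.edgeSet := by
          intro f hfw
          rw [hG'def, SimpleGraph.edgeSet_deleteEdges]
          refine ⟨w.edges_subset_edgeSet hfw, ?_⟩
          simp only [Set.mem_singleton_iff]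
          rintro rfl
          exact hds (hw _ (w.snd_mem_support_of_mem_edges (show s(d.fst, d.snd) ∈ w.edges from hfw)))
        exact ⟨w.transfer G' hwe, by rw [SimpleGraph.Walk.support_transfer]; exact hw⟩
      · -- ConnIn G' Aᶜ
        intro a ha b hb
        obtain ⟨w, hw⟩ := hAc a ha b hb
        have hwe : ∀ f ∈ w.edges, f ∈ G'.edgeSet := by
          intro f hfw
          rw [hG'def, SimpleGraph.edgeSet_deleteEdges]
          refine ⟨w.edges_subset_edgeSet hfw, ?_⟩
          simp only [Set.mem_singleton_iff]
          rintro rfl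
          exact (hw _ (w.fst_mem_support_of_mem_edges (show s(d.fst, d.snd) ∈ w.edges from hfw))) hdf
        exact ⟨w.transfer G' hwe, by rw [SimpleGraph.Walk.support_transfer]; exact hw⟩
      · rw [hcut']; exact hfin.subset Set.diff_subset
      · have := hc e he.1
        show cutCap G' c A ≤ m
        omega
    · -- same argument as in the zero case
      apply Set.Finite.subset (Set.finite_singleton {z | G.Reachable x z})
      rintro A ⟨hx, hy, hA, hAc, -, -⟩
      have hsub : A ⊆ {z | G.Reachable x z} := fun z hz => by
        obtain ⟨w, -⟩ := hA x hx z hz; exact ⟨w⟩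
      have hsub' : Aᶜ ⊆ {z | G.Reachable y z} := fun z hz => by
        obtain ⟨w, -⟩ := hAc y hy z hz; exact ⟨w⟩
      have : A = {z | G.Reachable x z} := by
        apply Set.Subset.antisymm hsub
        intro z hz
        by_contra hzA
        exact hreach (hz.trans (hsub' hzA).symm)
      simpa using this

section Thin

variable {V : Type*} {G : SimpleGraph V} {A : Set V} {c : Sym2 V → ℕ}

lemma cutCap_compl : cutCap G c Aᶜ = cutCap G c A := by
  rw [cutCap, cutCap, cutEdges_compl]

lemma thin_compl {n : ℕ} (h : IsThin G c n A) : IsThin G c n Aᶜ := by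
  obtain ⟨⟨hne, hnu, hfin⟩, hcap, hbg⟩ := h
  refine ⟨⟨?_, ?_, by rwa [cutEdges_compl]⟩, by rwa [cutCap_compl], ?_⟩
  · intro h'; exact hnu (by rwa [Set.compl_empty_iff] at h')
  · intro h'; exact hne (by rwa [Set.compl_univ_iff] at h')
  · intro hb
    exact hbg (by simpa using hb.compl)

lemma connIn_of_thin (hG : G.Connected) (hc : ∀ e ∈ G.edgeSet, 0 < c e) {n : ℕ}
    (hA : IsThin G c n A) : ConnIn G A := by
  by_contra hcon
  obtain ⟨⟨hne, hnu, hfin⟩, hcap, hbg⟩ := hA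
  rw [ConnIn] at hcon
  push_neg at hcon
  obtain ⟨a, ha, b, hb, hnw⟩ := hcon
  set A1 : Set V := {z | ∃ w : G.Walk a z, ∀ v ∈ w.support, v ∈ A} with hA1def
  have ha1 : a ∈ A1 := ⟨SimpleGraph.Walk.nil, by simpa using ha⟩
  have hA1A : A1 ⊆ A := by
    rintro z ⟨w, hw⟩
    exact hw z w.end_mem_support
  have hb1 : b ∉ A1 := by
    rintro ⟨w, hw⟩
    obtain ⟨v, hv, hvA⟩ := hnw w
    exact hvA (hw v hv)
  have hcl : ∀ z ∈ A1, ∀ t, G.Adj z t → t ∈ A → t ∈ A1 := by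
    rintro z ⟨w, hw⟩ t hadj htA
    refine ⟨w.append (SimpleGraph.Walk.cons hadj SimpleGraph.Walk.nil), ?_⟩
    intro v hv
    rw [SimpleGraph.Walk.mem_support_append_iff] at hv
    rcases hv with hv | hv
    · exact hw v hv
    · have hv' : v = z ∨ v = t := by
        simpa using hv
      rcases hv' with h' | h'
      · subst h'; exact hw _ w.end_mem_support
      · subst h'; exact htA
  set A2 : Set V := A \ A1 with hA2def
  have hb2 : b ∈ A2 := ⟨hb, hb1⟩
  have hnoedge : ∀ z ∈ A1, ∀ t ∈ A2, ¬ G.Adj z t := by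
    intro z hz t ht hadj
    exact ht.2 (hcl z hz t hadj ht.1)
  have h1 : cutEdges G A1 ⊆ cutEdges G A := by
    rintro e ⟨hes, u, v, rfl, hu, hv⟩
    refine ⟨hes, u, v, rfl, hA1A hu, ?_⟩
    intro hvA
    exact hnoedge u hu v ⟨hvA, hv⟩ ((SimpleGraph.mem_edgeSet _).mp hes)
  have h2 : cutEdges G A2 ⊆ cutEdges G A := by
    rintro e ⟨hes, u, v, rfl, hu, hv⟩
    refine ⟨hes, u, v, rfl, hu.1, ?_⟩
    intro hvA
    by_cases hv1 : v ∈ A1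
    · exact hnoedge v hv1 u hu (((SimpleGraph.mem_edgeSet _).mp hes).symm)
    · exact hv ⟨hvA, hv1⟩
  have hsplit : cutEdges G A = cutEdges G A1 ∪ cutEdges G A2 := by
    apply Set.Subset.antisymm
    · rintro e ⟨hes, u, v, rfl, hu, hv⟩
      by_cases hu1 : u ∈ A1
      · exact Or.inl ⟨hes, u, v, rfl, hu1, fun h => hv (hA1A h)⟩
      · exact Or.inr ⟨hes, u, v, rfl, ⟨hu, hu1⟩, fun h => hv h.1⟩
    · exact Set.union_subset h1 h2
  have hdisj : Disjoint (cutEdges G A1) (cutEdges G A2) := by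
    rw [Set.disjoint_left]
    rintro e ⟨hes, u, v, rfl, hu, hv⟩ ⟨_, u', v', heq, hu', hv'⟩
    rw [Sym2.eq_iff] at heq
    rcases heq with ⟨he1, he2⟩ | ⟨he1, he2⟩
    · exact hu'.2 (he1 ▸ hu)
    · exact hnoedge u hu v (show v ∈ A2 by rw [he2]; exact hu')
        ((SimpleGraph.mem_edgeSet _).mp hes)
  have hf1 : (cutEdges G A1).Finite := hfin.subset h1
  have hf2 : (cutEdges G A2).Finite := hfin.subset h2
  have hcapsum : cutCap G c A = cutCap G c A1 + cutCap G c A2 := by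
    rw [cutCap, hsplit, finsum_mem_union hdisj hf1 hf2]; rfl
  have hp1 : 1 ≤ cutCap G c A1 := by
    by_contra h
    have h0 : cutCap G c A1 = 0 := by omega
    have := cutEdges_eq_empty_of_cutCap_zero hf1 hc h0
    rcases eq_empty_or_univ_of_cutEdges_empty hG this with h' | h'
    · rw [h'] at ha1; exact ha1
    · rw [h'] at hb1; exact hb1 trivial
  have hp2 : 1 ≤ cutCap G c A2 := by
    by_contra h
    have h0 : cutCap G c A2 = 0 := by omega
    have := cutEdges_eq_empty_of_cutCap_zero hf2 hc h0
    rcases eq_empty_or_univ_of_cutEdges_empty hG this with h' | h'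
    · rw [h'] at hb2; exact hb2
    · have haA2 : a ∈ A2 := by rw [h']; trivial
      exact haA2.2 ha1
  have hAeq : A = A1 ∪ A2 := by
    apply Set.Subset.antisymm
    · intro z hz
      by_cases hz1 : z ∈ A1
      · exact Or.inl hz1
      · exact Or.inr ⟨hz, hz1⟩
    · exact Set.union_subset hA1A Set.diff_subset
  have hcut1 : IsCut G A1 :=
    ⟨(Set.nonempty_of_mem ha1).ne_empty, fun h => hb1 (by rw [h]; trivial), hf1⟩
  have hcut2 : IsCut G A2 :=
    ⟨(Set.nonempty_of_mem hb2).ne_empty,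
      fun h => ((show a ∈ A2 by rw [h]; trivial).2 ha1), hf2⟩
  have hle1 : cutCap G c A1 ≤ n - 1 := by omega
  have hle2 : cutCap G c A2 ≤ n - 1 := by omega
  exact hbg (by rw [hAeq]; exact BoolGen.union (.base ⟨hcut1, hle1⟩) (.base ⟨hcut2, hle2⟩))

end Thin


/-- For any cut `B` there are only finitely many `n`-thin cuts that are not nested
with `B`. -/
theorem finitely_many_crossing_thin_cuts {V : Type*} (G : SimpleGraph V) (hG : G.Connected)
    (c : Sym2 V → ℕ) (hc : ∀ e ∈ G.edgeSet, 0 < c e)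
    (B : Set V) (hB : IsCut G B) (n : ℕ) (hn : 1 ≤ n) :
    {A : Set V | IsThin G c n A ∧ ¬ Nested A B}.Finite := by
  unfold Nested
  set S : Set V := ⋃ e ∈ cutEdges G B, {v | v ∈ e} with hSdef
  have hSfin : S.Finite := by
    apply Set.Finite.biUnion hB.2.2
    intro e _
    induction e using Sym2.ind with
    | _ a b =>
      have : {v | v ∈ s(a, b)} = {a, b} := by
        ext v; simp [Sym2.mem_iff]
      rw [this]
      exact (Set.finite_singleton b).insert a
  apply Set.Finite.subset (Set.Finite.biUnion hSfin (fun x _ => Set.Finite.biUnion hSfin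
    (fun y _ => key_finite n G c hc x y)))
  rintro A ⟨hthin, hnest⟩
  push_neg at hnest
  obtain ⟨hc1, hc2, hc3, hc4⟩ := hnest
  have hconnA : ConnIn G A := connIn_of_thin hG hc hthin
  have hconnAc : ConnIn G Aᶜ := connIn_of_thin hG hc (thin_compl hthin)
  -- find x ∈ A which is an endpoint of an edge of the boundary of B
  obtain ⟨p, hpA, hpB⟩ := hc1
  obtain ⟨q, hqA, hqB⟩ := hc2
  obtain ⟨w, hw⟩ := hconnA p hpA q hqA
  obtain ⟨d, hd, hdf, hds⟩ := w.exists_boundary_dart B hpB hqB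
  have hxA : d.fst ∈ A := hw _ (w.dart_fst_mem_support_of_mem_darts hd)
  have hxS : d.fst ∈ S := by
    apply Set.mem_biUnion (show d.edge ∈ cutEdges G B from ⟨d.edge_mem, d.fst, d.snd, rfl, hdf, hds⟩)
    exact Sym2.mem_mk_left _ _
  -- find y ∈ Aᶜ which is an endpoint of an edge of the boundary of B
  obtain ⟨p', hpA', hpB'⟩ := hc3
  obtain ⟨q', hqA', hqB'⟩ := hc4
  obtain ⟨w', hw'⟩ := hconnAc p' hpA' q' hqA'
  obtain ⟨d', hd', hdf', hds'⟩ := w'.exists_boundary_dart B hpB' hqB'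
  have hyA : d'.fst ∈ Aᶜ := hw' _ (w'.dart_fst_mem_support_of_mem_darts hd')
  have hyS : d'.fst ∈ S := by
    apply Set.mem_biUnion
      (show d'.edge ∈ cutEdges G B from ⟨d'.edge_mem, d'.fst, d'.snd, rfl, hdf', hds'⟩)
    exact Sym2.mem_mk_left _ _
  exact Set.mem_biUnion hxS (Set.mem_biUnion hyS
    ⟨hxA, hyA, hconnA, hconnAc, hthin.1.2.2, le_of_eq hthin.2.1⟩)
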